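/- Let a,b,c,a',b',c' ∈ ℝ² and d : ℝ² × ℝ² → ℝ symmetric. Define the six sets H(a,b), H(b,c), H(c,a), h(a,b), h(b,c), h(c,a) by: H(a,b) = {x : d(a,b') - d(b,b') ≤ d(a,x) - d(b,x)}, H(b,c) = {x : d(b,c') - d(c,c') ≤ d(b,x) - d(c,x)}, H(c,a) = {x : d(c,a') - d(a,a') ≤ d(c,x) - d(a,x)}, h(a,b) = {x : d(a,x) - d(b,x) ≤ d(a,a') - d(b,a')}, h(b,c) = {x : d(b,x) - d(c,x) ≤ d(b,b') - d(c,b')}, h(c,a) = {x : d(c,x) - d(a,x) ≤ d(c,c') - d(a,c')}. If the five intersections H(a,b) ∩ H(b,c) ∩ H(c,a), h(a,b) ∩ h(b,c) ∩ h(c,a), H(a,b) ∩ h(a,b), H(b,c) ∩ h(b,c), and H(c,a) ∩ h(c,a) are all nonempty, then the matching {(a,a'),(b,b'),(c,c')} is max-sum: for every permutation σ of {a',b',c'}, d(a,σ(a')) + d(b,σ(b')) + d(c,σ(c')) ≤ d(a,a') + d(b,b') + d(c,c'). -/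

import Mathlib

theorem five_intersections_imply_maxsum
    (d : EuclideanSpace ℝ (Fin 2) → EuclideanSpace ℝ (Fin 2) → ℝ)
    (hsymm : ∀ x y, d x y = d y x)
    (a b c a' b' c' : EuclideanSpace ℝ (Fin 2))
    (h1 : ({x | d a b' - d b b' ≤ d a x - d b x} ∩
           {x | d b c' - d c c' ≤ d b x - d c x} ∩
           {x | d c a' - d a a' ≤ d c x - d a x}).Nonempty)
    (h2 : ({x | d a x - d b x ≤ d a a' - d b a'} ∩
           {x | d b x - d c x ≤ d b b' - d c b'} ∩
           {x | d c x - d a x ≤ d c c' - d a c'}).Nonempty)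
    (h3 : ({x | d a b' - d b b' ≤ d a x - d b x} ∩
           {x | d a x - d b x ≤ d a a' - d b a'}).Nonempty)
    (h4 : ({x | d b c' - d c c' ≤ d b x - d c x} ∩
           {x | d b x - d c x ≤ d b b' - d c b'}).Nonempty)
    (h5 : ({x | d c a' - d a a' ≤ d c x - d a x} ∩
           {x | d c x - d a x ≤ d c c' - d a c'}).Nonempty) :
    ∀ σ : Equiv.Perm (Fin 3),
      ∑ i, d (![a, b, c] i) (![a', b', c'] (σ i)) ≤ d a a' + d b b' + d c c' := by
  obtain ⟨x1, ⟨⟨p1, p2⟩, p3⟩⟩ := h1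
  obtain ⟨x2, ⟨⟨q1, q2⟩, q3⟩⟩ := h2
  obtain ⟨x3, ⟨r1, r2⟩⟩ := h3
  obtain ⟨x4, ⟨s1, s2⟩⟩ := h4
  obtain ⟨x5, ⟨t1, t2⟩⟩ := h5
  simp only [Set.mem_setOf_eq] at *
  intro σ
  have hσ : ∀ τ : Equiv.Perm (Fin 3), (τ 0 = 0 ∧ τ 1 = 1 ∧ τ 2 = 2) ∨ (τ 0 = 0 ∧ τ 1 = 2 ∧ τ 2 = 1) ∨
      (τ 0 = 1 ∧ τ 1 = 0 ∧ τ 2 = 2) ∨ (τ 0 = 1 ∧ τ 1 = 2 ∧ τ 2 = 0) ∨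
      (τ 0 = 2 ∧ τ 1 = 0 ∧ τ 2 = 1) ∨ (τ 0 = 2 ∧ τ 1 = 1 ∧ τ 2 = 0) := by decide
  rcases hσ σ with ⟨e0, e1, e2⟩ | ⟨e0, e1, e2⟩ | ⟨e0, e1, e2⟩ | ⟨e0, e1, e2⟩ | ⟨e0, e1, e2⟩ | ⟨e0, e1, e2⟩ <;>
    simp [Fin.sum_univ_three, e0, e1, e2] <;> linarith
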